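/- Let n and ℓ be natural numbers with 3 ≤ ℓ ≤ n − 1, and let a > 0 be a real number. Then there exists a constant C ≥ 1 such that for every r ∈ (0, a], C^{−1} · r^{2−ℓ} ≤ ∫₀^a t^{n−ℓ−1} (r² + t²)^{−(n−2)/2} dt ≤ C · r^{2−ℓ}. -/

import Mathlib

open intervalIntegral MeasureTheory

private lemma green_subst (m : ℕ) (e : ℝ) (a r : ℝ) (hr : 0 < r) :
    (∫ t in (0:ℝ)..a, t ^ m * (r ^ 2 + t ^ 2) ^ e)
      = (r * r ^ m * (r ^ 2) ^ e) * ∫ s in (0:ℝ)..(a / r), s ^ m * (1 + s ^ 2) ^ e := by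
  have h1 : (∫ s in (0:ℝ)..(a / r), (fun t => t ^ m * (r ^ 2 + t ^ 2) ^ e) (r * s))
      = r⁻¹ • ∫ t in (r * 0)..(r * (a / r)), t ^ m * (r ^ 2 + t ^ 2) ^ e :=
    intervalIntegral.integral_comp_mul_left (fun t => t ^ m * (r ^ 2 + t ^ 2) ^ e) hr.ne'
  rw [mul_zero, mul_div_cancel₀ _ hr.ne'] at h1
  have h2 : ∀ s : ℝ, (fun t => t ^ m * (r ^ 2 + t ^ 2) ^ e) (r * s)
      = (r ^ m * (r ^ 2) ^ e) * (s ^ m * (1 + s ^ 2) ^ e) := by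
    intro s
    simp only [mul_pow]
    rw [show r ^ 2 + r ^ 2 * s ^ 2 = r ^ 2 * (1 + s ^ 2) by ring,
      Real.mul_rpow (sq_nonneg r) (by positivity)]
    ring
  simp only [h2] at h1
  rw [intervalIntegral.integral_const_mul] at h1
  have h3 := congrArg (fun x => r * x) h1
  simp only [smul_eq_mul, ← mul_assoc, mul_inv_cancel₀ hr.ne', one_mul] at h3
  rw [← h3]

private lemma green_rpow_algebra (n ℓ : ℕ) (hn : ℓ + 1 ≤ n) (r : ℝ) (hr : 0 < r) :
    r * r ^ (n - ℓ - 1) * (r ^ 2) ^ (-((n : ℝ) - 2) / 2) = r ^ ((2:ℝ) - ℓ) := by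
  have hm : ((n - ℓ - 1 : ℕ) : ℝ) = (n : ℝ) - ℓ - 1 := by
    have h : (n - ℓ - 1 : ℕ) = n - (ℓ + 1) := by omega
    rw [h, Nat.cast_sub hn]; push_cast; ring
  have h2 : (r ^ 2) ^ (-((n : ℝ) - 2) / 2) = r ^ ((2:ℝ) * (-((n : ℝ) - 2) / 2)) := by
    rw [← Real.rpow_natCast r 2, ← Real.rpow_mul hr.le]; norm_num
  calc r * r ^ (n - ℓ - 1) * (r ^ 2) ^ (-((n : ℝ) - 2) / 2)
      = r ^ ((1:ℝ) + ((n - ℓ - 1 : ℕ) : ℝ) + (2:ℝ) * (-((n : ℝ) - 2) / 2)) := by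
        rw [Real.rpow_add hr, Real.rpow_add hr, Real.rpow_one, Real.rpow_natCast, ← h2]
    _ = r ^ ((2:ℝ) - ℓ) := by congr 1; rw [hm]; ring

/-- Two-sided asymptotics `∫₀^a t^{n−ℓ−1}(r²+t²)^{−(n−2)/2} dt ∼ r^{2−ℓ}` when
`3 ≤ ℓ ≤ n − 1`. -/
theorem green_integral_asymptotics_of_three_le
    (n ℓ : ℕ) (hl : 3 ≤ ℓ) (hn : ℓ + 1 ≤ n) (a : ℝ) (ha : 0 < a) :
    ∃ C : ℝ, 1 ≤ C ∧ ∀ r ∈ Set.Ioc (0 : ℝ) a,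
      C⁻¹ * r ^ ((2 : ℝ) - ℓ) ≤
          (∫ t in (0 : ℝ)..a, t ^ (n - ℓ - 1) * (r ^ 2 + t ^ 2) ^ (-((n : ℝ) - 2) / 2)) ∧
        (∫ t in (0 : ℝ)..a, t ^ (n - ℓ - 1) * (r ^ 2 + t ^ 2) ^ (-((n : ℝ) - 2) / 2)) ≤
          C * r ^ ((2 : ℝ) - ℓ) := by
  set m : ℕ := n - ℓ - 1 with hm_def
  set e : ℝ := -((n : ℝ) - 2) / 2 with he_def
  have hn4 : 4 ≤ n := by omega
  have he : e ≤ 0 := by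
    rw [he_def]
    have : (4:ℝ) ≤ n := by exact_mod_cast hn4
    linarith
  set g : ℝ → ℝ := fun s => s ^ m * (1 + s ^ 2) ^ e with hg_def
  have hgc : Continuous g :=
    (continuous_pow m).mul ((continuous_const.add (continuous_pow 2)).rpow_const
      (fun s => Or.inl (by show (1:ℝ) + s ^ 2 ≠ 0; positivity)))
  have hgi : ∀ u v : ℝ, IntervalIntegrable g volume u v := fun u v =>
    hgc.intervalIntegrable u v
  set J1 : ℝ := ∫ s in (0:ℝ)..1, g s with hJ1_def
  -- J1 > 0
  have hJ1pos : 0 < J1 := by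
    apply intervalIntegral_pos_of_pos_on (hgi 0 1) _ one_pos
    intro s hs
    have h1 : 0 < s := hs.1
    simp only [hg_def]
    positivity
  -- pointwise bound on [1, x]
  have hptw : ∀ s : ℝ, 1 ≤ s → g s ≤ s ^ (-2 : ℝ) := by
    intro s hs
    have hs0 : (0:ℝ) < s := lt_of_lt_of_le one_pos hs
    have step1 : (1 + s ^ 2) ^ e ≤ (s ^ 2) ^ e :=
      Real.rpow_le_rpow_of_nonpos (by positivity) (by linarith [sq_nonneg s]) he
    have step2 : g s ≤ s ^ m * (s ^ 2) ^ e :=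
      mul_le_mul_of_nonneg_left step1 (pow_nonneg hs0.le m)
    have step3 : s ^ m * (s ^ 2) ^ e = s ^ ((m:ℝ) + 2 * e) := by
      rw [← Real.rpow_natCast s m, ← Real.rpow_natCast s 2, ← Real.rpow_mul hs0.le,
        ← Real.rpow_add hs0]
      norm_num
    have hexp : (m:ℝ) + 2 * e ≤ -2 := by
      have hmc : ((m : ℕ) : ℝ) = (n : ℝ) - ℓ - 1 := by
        have h : (m : ℕ) = n - (ℓ + 1) := by omega
        rw [h, Nat.cast_sub hn]; push_cast; ring
      have hlc : (3:ℝ) ≤ ℓ := by exact_mod_cast hl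
      rw [hmc, he_def]; linarith
    calc g s ≤ s ^ ((m:ℝ) + 2 * e) := by rw [← step3]; exact step2
      _ ≤ s ^ (-2 : ℝ) := Real.rpow_le_rpow_of_exponent_le hs hexp
  -- bounds on J x for x ≥ 1
  have hJlow : ∀ x : ℝ, 1 ≤ x → J1 ≤ ∫ s in (0:ℝ)..x, g s := by
    intro x hx
    rw [← intervalIntegral.integral_add_adjacent_intervals (hgi 0 1) (hgi 1 x)]
    have h0 : 0 ≤ ∫ s in (1:ℝ)..x, g s := by
      apply intervalIntegral.integral_nonneg hx
      intro s hs
      have : (0:ℝ) ≤ s := le_trans zero_le_one hs.1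
      simp only [hg_def]
      positivity
    linarith
  have hJhigh : ∀ x : ℝ, 1 ≤ x → (∫ s in (0:ℝ)..x, g s) ≤ J1 + 1 := by
    intro x hx
    rw [← intervalIntegral.integral_add_adjacent_intervals (hgi 0 1) (hgi 1 x)]
    have hmono : (∫ s in (1:ℝ)..x, g s) ≤ ∫ s in (1:ℝ)..x, s ^ (-2 : ℝ) := by
      apply intervalIntegral.integral_mono_on hx (hgi 1 x)
        (intervalIntegral.intervalIntegrable_rpow (Or.inr (by
          rw [Set.mem_uIcc]; push_neg; constructor <;> intro h <;> nlinarith)))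
      intro s hs
      exact hptw s hs.1
    have hval : (∫ s in (1:ℝ)..x, s ^ (-2 : ℝ)) ≤ 1 := by
      rw [integral_rpow (Or.inr ⟨by norm_num, by
        rw [Set.mem_uIcc]; push_neg; constructor <;> intro h <;> nlinarith⟩)]
      have hx0 : (0:ℝ) < x := by linarith
      rw [show (-2 : ℝ) + 1 = -1 by ring, Real.rpow_neg_one, Real.rpow_neg_one]
      have : (0:ℝ) ≤ x⁻¹ := by positivity
      norm_num
      linarith
    linarith
  -- assemble
  refine ⟨max (J1 + 1) J1⁻¹, le_max_of_le_left (by linarith), ?_⟩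
  intro r hr
  obtain ⟨hr0, hra⟩ := hr
  have hsub := green_subst m e a r hr0
  have halg := green_rpow_algebra n ℓ hn r hr0
  have hx1 : (1:ℝ) ≤ a / r := (one_le_div hr0).mpr hra
  have hrp : (0:ℝ) < r ^ ((2:ℝ) - ℓ) := Real.rpow_pos_of_pos hr0 _
  have hconst : r * r ^ m * (r ^ 2) ^ e = r ^ ((2:ℝ) - ℓ) := halg
  rw [hsub, hconst]
  have hClow : (max (J1 + 1) J1⁻¹)⁻¹ ≤ J1 := by
    rw [inv_le_comm₀ (lt_of_lt_of_le (inv_pos.mpr hJ1pos) (le_max_right _ _)) hJ1pos]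
    exact le_max_right _ _
  constructor
  · calc (max (J1 + 1) J1⁻¹)⁻¹ * r ^ ((2:ℝ) - ℓ)
        ≤ J1 * r ^ ((2:ℝ) - ℓ) := mul_le_mul_of_nonneg_right hClow hrp.le
      _ ≤ r ^ ((2:ℝ) - ℓ) * ∫ s in (0:ℝ)..(a / r), g s := by
          rw [mul_comm]
          exact mul_le_mul_of_nonneg_left (hJlow _ hx1) hrp.le
  · calc r ^ ((2:ℝ) - ℓ) * ∫ s in (0:ℝ)..(a / r), g s
        ≤ r ^ ((2:ℝ) - ℓ) * (J1 + 1) :=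
          mul_le_mul_of_nonneg_left (hJhigh _ hx1) hrp.le
      _ ≤ max (J1 + 1) J1⁻¹ * r ^ ((2:ℝ) - ℓ) := by
          rw [mul_comm]
          exact mul_le_mul_of_nonneg_right (le_max_left _ _) hrp.le
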